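/- Let (H,R) be a quasitriangular Hopf algebra with twist F = R, A a quasi-commutative left H-module algebra, and V a strong quasi-commutative left H-module A-bimodule. Then the R-twisted structures coincide with the opposite structures: H^R = H^cop as Hopf algebras, A_{⋆_R} = A^op as algebras, and V_{⋆_R} = V^op as A^op-bimodules. -/

import Mathlib

open TensorProduct

noncomputable section

variable (K : Type*) [CommRing K] (H : Type*) [Ring H] [HopfAlgebra K H]

namespace TwistPaper

def muH : H ⊗[K] H →ₗ[K] H := LinearMap.mul' K H
def ΔH : H →ₗ[K] H ⊗[K] H := Coalgebra.comul
def εH : H →ₗ[K] K := Coalgebra.counit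
def SH : H →ₗ[K] H := HopfAlgebra.antipode (R := K)

/-- `x ⊗ y ↦ x ⊗ (y ⊗ 1)`, i.e. `R ↦ R₁₂`. -/
def ins3 : H ⊗[K] H →ₗ[K] H ⊗[K] (H ⊗[K] H) :=
  LinearMap.lTensor H ((TensorProduct.mk K H H).flip 1)
/-- `R ↦ R₂₃ = 1 ⊗ R`. -/
def ins1 : H ⊗[K] H →ₗ[K] H ⊗[K] (H ⊗[K] H) :=
  TensorProduct.mk K H (H ⊗[K] H) 1
/-- `x ⊗ y ↦ x ⊗ (1 ⊗ y)`, i.e. `R ↦ R₁₃`. -/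
def ins2 : H ⊗[K] H →ₗ[K] H ⊗[K] (H ⊗[K] H) :=
  LinearMap.lTensor H (TensorProduct.mk K H H 1)
def comulLeft : H ⊗[K] H →ₗ[K] H ⊗[K] (H ⊗[K] H) :=
  (TensorProduct.assoc K H H H).toLinearMap ∘ₗ (ΔH K H).rTensor H
def comulRight : H ⊗[K] H →ₗ[K] H ⊗[K] (H ⊗[K] H) :=
  (ΔH K H).lTensor H

/-- `(H, R)` is quasitriangular: `R` is invertible, `Δ^cop(ξ) = R Δ(ξ) R⁻¹`,
`(Δ⊗id)R = R₁₃R₂₃` and `(id⊗Δ)R = R₁₃R₁₂`. -/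
structure IsQuasitriangular (Rm Rinv : H ⊗[K] H) : Prop where
  mul_inv : Rm * Rinv = 1
  inv_mul : Rinv * Rm = 1
  quasi_cocomm : ∀ ξ : H, TensorProduct.comm K H H (ΔH K H ξ) = Rm * ΔH K H ξ * Rinv
  hexagon1 : comulLeft K H Rm = ins2 K H Rm * ins1 K H Rm
  hexagon2 : comulRight K H Rm = ins2 K H Rm * ins3 K H Rm

/-- `sw x f g c v w = Σ c (f x¹ v) (g x² w)` for `x = Σ x¹ ⊗ x²`. -/
def sw {V W V' W' Z : Type*}
    [AddCommGroup V] [Module K V] [AddCommGroup W] [Module K W]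
    [AddCommGroup V'] [Module K V'] [AddCommGroup W'] [Module K W']
    [AddCommGroup Z] [Module K Z]
    (x : H ⊗[K] H) (f : H →ₗ[K] V →ₗ[K] V') (g : H →ₗ[K] W →ₗ[K] W')
    (c : V' →ₗ[K] W' →ₗ[K] Z) : V →ₗ[K] W →ₗ[K] Z :=
  ((TensorProduct.mapBilinear (RingHom.id K) H H V' W').compr₂
      (TensorProduct.lift c ∘ₗ LinearMap.applyₗ (R := K) x)).compl₁₂ f.flip g.flip

/-- `ρ` is a left `H`-module structure. -/
def IsHAction {V : Type*} [AddCommGroup V] [Module K V] (ρ : H →ₗ[K] V →ₗ[K] V) : Prop :=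
  (∀ ξ ζ : H, ∀ v : V, ρ (ξ * ζ) v = ρ ξ (ρ ζ v)) ∧ (∀ v : V, ρ 1 v = v)

/-- `(A, m, ρ)` is a left `H`-module algebra. -/
def IsModuleAlgebra {A : Type*} [AddCommGroup A] [Module K A]
    (m : A →ₗ[K] A →ₗ[K] A) (ρ : H →ₗ[K] A →ₗ[K] A) : Prop :=
  IsHAction K H ρ ∧ ∀ (ξ : H) (a b : A), ρ ξ (m a b) = sw K H (ΔH K H ξ) ρ ρ m a b

/-- `conjEnd f g (η ⊗ ζ) P = f η ∘ₗ P ∘ₗ g ζ` on `Hom_K(V,W)`. -/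
def conjEnd {V W : Type*} [AddCommGroup V] [Module K V] [AddCommGroup W] [Module K W]
    (f : H →ₗ[K] W →ₗ[K] W) (g : H →ₗ[K] V →ₗ[K] V) :
    H ⊗[K] H →ₗ[K] (V →ₗ[K] W) →ₗ[K] (V →ₗ[K] W) :=
  TensorProduct.lift
    ((LinearMap.llcomp K (V →ₗ[K] W) (V →ₗ[K] W) (V →ₗ[K] W) ∘ₗ
        (LinearMap.llcomp K V W W ∘ₗ f)).compl₂
      ((LinearMap.llcomp K V V W).flip ∘ₗ g))

/-- The `H`-adjoint action `ξ ▶ P = (ξ₁ ▷) ∘ P ∘ (S(ξ₂) ▷)` on `Hom_K(V,W)`. -/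
def adjHom {V W : Type*} [AddCommGroup V] [Module K V] [AddCommGroup W] [Module K W]
    (ρW : H →ₗ[K] W →ₗ[K] W) (ρV : H →ₗ[K] V →ₗ[K] V) :
    H →ₗ[K] (V →ₗ[K] W) →ₗ[K] (V →ₗ[K] W) :=
  conjEnd K H ρW (ρV ∘ₗ SH K H) ∘ₗ ΔH K H

/-- The tensor product action `ξ ▷ (v ⊗ w) = (ξ₁ ▷ v) ⊗ (ξ₂ ▷ w)`. -/
def tensAct {V W : Type*} [AddCommGroup V] [Module K V] [AddCommGroup W] [Module K W]
    (ρV : H →ₗ[K] V →ₗ[K] V) (ρW : H →ₗ[K] W →ₗ[K] W) :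
    H →ₗ[K] (V ⊗[K] W) →ₗ[K] (V ⊗[K] W) :=
  (TensorProduct.homTensorHomMap (RingHom.id K) V W V W ∘ₗ TensorProduct.map ρV ρW) ∘ₗ ΔH K H

/-- The `R`-tensor product of `K`-linear maps,
`P ⊗_R Q = (P ∘ (R̄^α ▷)) ⊗ (R̄_α ▶ Q)`, as a bilinear map in `(P,Q)`. -/
def otimesR {V W V' W' : Type*}
    [AddCommGroup V] [Module K V] [AddCommGroup W] [Module K W]
    [AddCommGroup V'] [Module K V'] [AddCommGroup W'] [Module K W']
    (Rinv : H ⊗[K] H)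
    (ρV : H →ₗ[K] V →ₗ[K] V) (ρW : H →ₗ[K] W →ₗ[K] W) (ρW' : H →ₗ[K] W' →ₗ[K] W') :
    (V →ₗ[K] V') →ₗ[K] (W →ₗ[K] W') →ₗ[K] (V ⊗[K] W →ₗ[K] V' ⊗[K] W') :=
  ((TensorProduct.mapBilinear (RingHom.id K) H H (V →ₗ[K] V') (W →ₗ[K] W')).compr₂
      (TensorProduct.homTensorHomMap (RingHom.id K) V W V' W' ∘ₗ LinearMap.applyₗ (R := K) Rinv)).compl₁₂
    (((LinearMap.llcomp K H (V →ₗ[K] V) (V →ₗ[K] V')).flip ρV) ∘ₗ LinearMap.llcomp K V V V')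
    ((adjHom K H ρW' ρW).flip)


/-- The twisted coproduct `Δ^F(ξ) = F Δ(ξ) F⁻¹` (here for the twist `F = R`). -/
def twistComul (F Finv : H ⊗[K] H) : H →ₗ[K] H ⊗[K] H :=
  LinearMap.mulLeft K F ∘ₗ LinearMap.mulRight K Finv ∘ₗ ΔH K H

/-- `χ = f^α S(f_α)`. -/
def chi (F : H ⊗[K] H) : H := muH K H ((SH K H).lTensor H F)
/-- `χ⁻¹ = S(f̄^α) f̄_α`. -/
def chiInv (Finv : H ⊗[K] H) : H := muH K H ((SH K H).rTensor H Finv)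

/-- The twisted antipode `S^F(ξ) = χ S(ξ) χ⁻¹` (here for the twist `F = R`). -/
def twistAntipode (F Finv : H ⊗[K] H) : H →ₗ[K] H :=
  LinearMap.mulLeft K (chi K H F) ∘ₗ LinearMap.mulRight K (chiInv K H Finv) ∘ₗ SH K H

variable {A V : Type*} [AddCommGroup A] [Module K A] [AddCommGroup V] [Module K V]


section swlemmas

variable {K : Type*} [CommRing K] {H : Type*} [Ring H] [HopfAlgebra K H]
variable {V W V' W' Z : Type*}
    [AddCommGroup V] [Module K V] [AddCommGroup W] [Module K W]
    [AddCommGroup V'] [Module K V'] [AddCommGroup W'] [Module K W']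
    [AddCommGroup Z] [Module K Z]

lemma sw_apply (x : H ⊗[K] H) (f : H →ₗ[K] V →ₗ[K] V') (g : H →ₗ[K] W →ₗ[K] W')
    (c : V' →ₗ[K] W' →ₗ[K] Z) (v : V) (w : W) :
    sw K H x f g c v w = TensorProduct.lift c (TensorProduct.map (f.flip v) (g.flip w) x) := rfl

lemma sw_tmul (ξ η : H) (f : H →ₗ[K] V →ₗ[K] V') (g : H →ₗ[K] W →ₗ[K] W')
    (c : V' →ₗ[K] W' →ₗ[K] Z) (v : V) (w : W) :
    sw K H (ξ ⊗ₜ[K] η) f g c v w = c (f ξ v) (g η w) := by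
  simp [sw_apply]

lemma sw_zero (f : H →ₗ[K] V →ₗ[K] V') (g : H →ₗ[K] W →ₗ[K] W')
    (c : V' →ₗ[K] W' →ₗ[K] Z) (v : V) (w : W) :
    sw K H (0 : H ⊗[K] H) f g c v w = 0 := by
  simp [sw_apply]

lemma sw_add (x y : H ⊗[K] H) (f : H →ₗ[K] V →ₗ[K] V') (g : H →ₗ[K] W →ₗ[K] W')
    (c : V' →ₗ[K] W' →ₗ[K] Z) (v : V) (w : W) :
    sw K H (x + y) f g c v w = sw K H x f g c v w + sw K H y f g c v w := by
  simp [sw_apply]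

lemma sw_one (f : H →ₗ[K] V →ₗ[K] V) (g : H →ₗ[K] W →ₗ[K] W)
    (c : V →ₗ[K] W →ₗ[K] Z) (hf : ∀ v, f 1 v = v) (hg : ∀ w, g 1 w = w) (v : V) (w : W) :
    sw K H (1 : H ⊗[K] H) f g c v w = c v w := by
  rw [Algebra.TensorProduct.one_def, sw_tmul, hf, hg]

lemma sw_flip (x : H ⊗[K] H) (f : H →ₗ[K] V →ₗ[K] V') (g : H →ₗ[K] W →ₗ[K] W')
    (c : W' →ₗ[K] V' →ₗ[K] Z) (v : V) (w : W) :
    sw K H x f g c.flip v w = sw K H (TensorProduct.comm K H H x) g f c w v := by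
  induction x using TensorProduct.induction_on with
  | zero => simp [sw_zero]
  | tmul ξ η => simp [sw_tmul]
  | add u u' ih ih' => simp only [map_add, sw_add, ih, ih']

lemma comm_mul (x y : H ⊗[K] H) :
    TensorProduct.comm K H H (x * y) =
      TensorProduct.comm K H H x * TensorProduct.comm K H H y := by
  induction x using TensorProduct.induction_on with
  | zero => simp
  | tmul a b =>
    induction y using TensorProduct.induction_on with
    | zero => simp
    | tmul c d => simp [Algebra.TensorProduct.tmul_mul_tmul]
    | add u u' ih ih' => simp only [mul_add, map_add, ih, ih']
  | add u u' ih ih' => simp only [add_mul, map_add, ih, ih']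

lemma sw_sw (x y : H ⊗[K] H) (f : H →ₗ[K] V →ₗ[K] V) (g : H →ₗ[K] W →ₗ[K] W)
    (c : V →ₗ[K] W →ₗ[K] Z)
    (hf : ∀ ξ ζ v, f (ξ * ζ) v = f ξ (f ζ v)) (hg : ∀ ξ ζ w, g (ξ * ζ) w = g ξ (g ζ w))
    (v : V) (w : W) :
    sw K H x f g (sw K H y f g c) v w = sw K H (y * x) f g c v w := by
  induction x using TensorProduct.induction_on with
  | zero => simp [sw_zero]
  | tmul ξ η =>
    rw [sw_tmul]
    induction y using TensorProduct.induction_on with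
    | zero => simp [sw_zero]
    | tmul p q => rw [sw_tmul, Algebra.TensorProduct.tmul_mul_tmul, sw_tmul, ← hf, ← hg]
    | add u u' ih ih' => simp only [add_mul, sw_add, ih, ih']
  | add u u' ih ih' => simp only [mul_add, sw_add, ih, ih']

end swlemmas

section hopf1

variable {K : Type*} [CommRing K] {H : Type*} [Ring H] [HopfAlgebra K H]

open Coalgebra HopfAlgebra

/-- collapse `Σ ε(ξ₁) • ξ₂ = ξ`. -/
lemma repr_counit_left {a : H} {ι : Type*} (r : Coalgebra.Repr K a ι) :
    ∑ i ∈ r.index, εH K H (r.left i) • r.right i = a := by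
  have h := Coalgebra.sum_counit_tmul_eq r
  apply_fun TensorProduct.lid K H at h
  rw [map_sum] at h
  simp only [TensorProduct.lid_tmul, one_smul] at h
  simpa [εH] using h

/-- collapse `Σ ε(ξ₂) • ξ₁ = ξ`. -/
lemma repr_counit_right {a : H} {ι : Type*} (r : Coalgebra.Repr K a ι) :
    ∑ i ∈ r.index, εH K H (r.right i) • r.left i = a := by
  have h := Coalgebra.sum_tmul_counit_eq r
  apply_fun TensorProduct.rid K H at h
  rw [map_sum] at h
  simp only [TensorProduct.rid_tmul, one_smul] at h
  simpa [εH] using h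

lemma repr_antipode_mul {a : H} {ι : Type*} (r : Coalgebra.Repr K a ι) :
    ∑ i ∈ r.index, SH K H (r.left i) * r.right i = εH K H a • 1 := by
  simpa [SH, εH] using HopfAlgebra.sum_antipode_mul_eq_smul r

lemma repr_mul_antipode {a : H} {ι : Type*} (r : Coalgebra.Repr K a ι) :
    ∑ i ∈ r.index, r.left i * SH K H (r.right i) = εH K H a • 1 := by
  simpa [SH, εH] using HopfAlgebra.sum_mul_antipode_eq_smul r

lemma S_one : SH K H 1 = 1 := by
  exact HopfAlgebra.antipode_one (R := K) (A := H)

/-- repr of a product, from reprs of the factors. -/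
def mulRepr {c d : H} {ι κ : Type*} (rc : Coalgebra.Repr K c ι) (rd : Coalgebra.Repr K d κ) :
    Coalgebra.Repr K (c * d) (ι × κ) where
  index := rc.index ×ˢ rd.index
  left := fun p => rc.left p.1 * rd.left p.2
  right := fun p => rc.right p.1 * rd.right p.2
  eq := by
    rw [Bialgebra.comul_mul, ← rc.eq, ← rd.eq, Finset.sum_mul_sum, Finset.sum_product]
    simp [Algebra.TensorProduct.tmul_mul_tmul]

/-- `ρ ⋆ m = ηε` pointwise: `Σ S(c₁d₁) c₂d₂ = ε(c)ε(d) • 1`. -/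
lemma St2 {c d : H} {ι κ : Type*} (rc : Coalgebra.Repr K c ι) (rd : Coalgebra.Repr K d κ) :
    ∑ i ∈ rc.index, ∑ j ∈ rd.index,
      SH K H (rc.left i * rd.left j) * (rc.right i * rd.right j)
      = (εH K H c * εH K H d) • 1 := by
  rw [show (εH K H c * εH K H d) = εH K H (c * d) by simp [εH, Bialgebra.counit_mul],
    ← repr_antipode_mul (mulRepr rc rd)]
  simp [mulRepr, Finset.sum_product]

/-- `m ⋆ ν = ηε` pointwise: `Σ c₁d₁ (S(d₂) S(c₂)) = ε(c)ε(d) • 1`. -/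
lemma St1 {c d : H} {ι κ : Type*} (rc : Coalgebra.Repr K c ι) (rd : Coalgebra.Repr K d κ) :
    ∑ i ∈ rc.index, ∑ j ∈ rd.index,
      (rc.left i * rd.left j) * (SH K H (rd.right j) * SH K H (rc.right i))
      = (εH K H c * εH K H d) • 1 := by
  have inner : ∀ i, ∑ j ∈ rd.index,
      (rc.left i * rd.left j) * (SH K H (rd.right j) * SH K H (rc.right i))
      = εH K H d • (rc.left i * SH K H (rc.right i)) := by
    intro i
    have : ∀ j, (rc.left i * rd.left j) * (SH K H (rd.right j) * SH K H (rc.right i))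
        = rc.left i * ((rd.left j * SH K H (rd.right j)) * SH K H (rc.right i)) := by
      intro j; simp only [mul_assoc]
    rw [Finset.sum_congr rfl fun j _ => this j, ← Finset.mul_sum, ← Finset.sum_mul,
      repr_mul_antipode rd]
    simp [smul_mul_assoc, mul_smul_comm]
  rw [Finset.sum_congr rfl fun i _ => inner i, ← Finset.smul_sum, repr_mul_antipode rc]
  simp [smul_smul, mul_comm]

end hopf1

section hopf2

variable {K : Type*} [CommRing K] {H : Type*} [Ring H] [HopfAlgebra K H]

open Coalgebra HopfAlgebra

lemma repr_counit_smul_antipode {x : H} {ι : Type*} (r : Coalgebra.Repr K x ι) :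
    ∑ i ∈ r.index, εH K H (r.left i) • SH K H (r.right i) = SH K H x := by
  conv_rhs => rw [← repr_counit_left r, map_sum]
  exact Finset.sum_congr rfl fun i _ => (map_smul (SH K H) _ _).symm

/-- The 6-fold collapse map used in the proof of anti-multiplicativity. -/
def PsiBig (K : Type*) [CommRing K] (H : Type*) [Ring H] [HopfAlgebra K H] :
    (H ⊗[K] (H ⊗[K] H)) ⊗[K] (H ⊗[K] (H ⊗[K] H)) →ₗ[K] H :=
  (muH K H ∘ₗ LinearMap.lTensor H (muH K H)) ∘ₗ
  TensorProduct.map (SH K H ∘ₗ muH K H)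
    (TensorProduct.map (muH K H)
      (muH K H ∘ₗ TensorProduct.map (SH K H) (SH K H) ∘ₗ (TensorProduct.comm K H H).toLinearMap)) ∘ₗ
  LinearMap.lTensor (H ⊗[K] H) (TensorProduct.tensorTensorTensorComm K H H H H).toLinearMap ∘ₗ
  (TensorProduct.tensorTensorTensorComm K H (H ⊗[K] H) H (H ⊗[K] H)).toLinearMap

lemma PsiBig_tmul (x y z p q r : H) :
    PsiBig K H ((x ⊗ₜ (y ⊗ₜ z)) ⊗ₜ (p ⊗ₜ (q ⊗ₜ r)))
      = SH K H (x * p) * ((y * q) * (SH K H r * SH K H z)) := by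
  simp [PsiBig, muH]

lemma collapse1 {a b : H} (ra : Coalgebra.Repr K a (H × H)) (rb : Coalgebra.Repr K b (H × H))
    (ra1 : ∀ i, Coalgebra.Repr K (ra.left i) (H × H)) (rb1 : ∀ j, Coalgebra.Repr K (rb.left j) (H × H)) :
    ∑ j ∈ rb.index, ∑ l ∈ (rb1 j).index, ∑ i ∈ ra.index, ∑ k ∈ (ra1 i).index,
      SH K H ((ra1 i).left k * (rb1 j).left l) *
        (((ra1 i).right k * (rb1 j).right l) * (SH K H (rb.right j) * SH K H (ra.right i)))
      = SH K H b * SH K H a := by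
  calc ∑ j ∈ rb.index, ∑ l ∈ (rb1 j).index, ∑ i ∈ ra.index, ∑ k ∈ (ra1 i).index,
      SH K H ((ra1 i).left k * (rb1 j).left l) *
        (((ra1 i).right k * (rb1 j).right l) * (SH K H (rb.right j) * SH K H (ra.right i)))
      = ∑ j ∈ rb.index, ∑ i ∈ ra.index, ∑ k ∈ (ra1 i).index, ∑ l ∈ (rb1 j).index,
        SH K H ((ra1 i).left k * (rb1 j).left l) *
          (((ra1 i).right k * (rb1 j).right l) * (SH K H (rb.right j) * SH K H (ra.right i))) := by
        refine Finset.sum_congr rfl fun j _ => ?_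
        rw [Finset.sum_comm]
        exact Finset.sum_congr rfl fun i _ => Finset.sum_comm
    _ = ∑ j ∈ rb.index, ∑ i ∈ ra.index,
        ((εH K H (ra.left i) * εH K H (rb.left j)) • 1) *
          (SH K H (rb.right j) * SH K H (ra.right i)) := by
        refine Finset.sum_congr rfl fun j _ => Finset.sum_congr rfl fun i _ => ?_
        rw [Finset.sum_congr rfl fun k _ => Finset.sum_congr rfl fun l _ => (mul_assoc _ _ _).symm]
        rw [Finset.sum_congr rfl fun k _ => (Finset.sum_mul _ _ _).symm, ← Finset.sum_mul,
        St2 (ra1 i) (rb1 j)]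
    _ = ∑ j ∈ rb.index, ∑ i ∈ ra.index,
        (εH K H (rb.left j) • SH K H (rb.right j)) * (εH K H (ra.left i) • SH K H (ra.right i)) := by
        refine Finset.sum_congr rfl fun j _ => Finset.sum_congr rfl fun i _ => ?_
        rw [smul_mul_assoc, one_mul, smul_mul_smul_comm, mul_comm (εH K H (ra.left i))]
    _ = (∑ j ∈ rb.index, εH K H (rb.left j) • SH K H (rb.right j)) *
        (∑ i ∈ ra.index, εH K H (ra.left i) • SH K H (ra.right i)) := by
        rw [Finset.sum_congr rfl fun j (_ : j ∈ rb.index) => (Finset.mul_sum _ _ _).symm,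
        ← Finset.sum_mul]
    _ = SH K H b * SH K H a := by
        rw [repr_counit_smul_antipode ra, repr_counit_smul_antipode rb]

lemma collapse2 {a b : H} (ra : Coalgebra.Repr K a (H × H)) (rb : Coalgebra.Repr K b (H × H))
    (ra2 : ∀ i, Coalgebra.Repr K (ra.right i) (H × H)) (rb2 : ∀ j, Coalgebra.Repr K (rb.right j) (H × H)) :
    ∑ j ∈ rb.index, ∑ l ∈ (rb2 j).index, ∑ i ∈ ra.index, ∑ k ∈ (ra2 i).index,
      SH K H (ra.left i * rb.left j) *
        (((ra2 i).left k * (rb2 j).left l) * (SH K H ((rb2 j).right l) * SH K H ((ra2 i).right k)))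
      = SH K H (a * b) := by
  calc ∑ j ∈ rb.index, ∑ l ∈ (rb2 j).index, ∑ i ∈ ra.index, ∑ k ∈ (ra2 i).index,
      SH K H (ra.left i * rb.left j) *
        (((ra2 i).left k * (rb2 j).left l) * (SH K H ((rb2 j).right l) * SH K H ((ra2 i).right k)))
      = ∑ j ∈ rb.index, ∑ i ∈ ra.index, ∑ k ∈ (ra2 i).index, ∑ l ∈ (rb2 j).index,
        SH K H (ra.left i * rb.left j) *
          (((ra2 i).left k * (rb2 j).left l) * (SH K H ((rb2 j).right l) * SH K H ((ra2 i).right k))) := by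
        refine Finset.sum_congr rfl fun j _ => ?_
        rw [Finset.sum_comm]
        exact Finset.sum_congr rfl fun i _ => Finset.sum_comm
    _ = ∑ j ∈ rb.index, ∑ i ∈ ra.index,
        SH K H (ra.left i * rb.left j) * ((εH K H (ra.right i) * εH K H (rb.right j)) • 1) := by
        refine Finset.sum_congr rfl fun j _ => Finset.sum_congr rfl fun i _ => ?_
        rw [Finset.sum_congr rfl fun k (_ : k ∈ (ra2 i).index) => (Finset.mul_sum _ _ _).symm,
        ← Finset.mul_sum, St1 (ra2 i) (rb2 j)]
    _ = ∑ j ∈ rb.index, ∑ i ∈ ra.index,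
        (εH K H (ra.right i) * εH K H (rb.right j)) • SH K H (ra.left i * rb.left j) := by
        refine Finset.sum_congr rfl fun j _ => Finset.sum_congr rfl fun i _ => ?_
        rw [mul_smul_comm, mul_one]
    _ = SH K H (a * b) := by
        rw [Finset.sum_comm]
        conv_rhs => rw [← repr_counit_right ra, ← repr_counit_right rb, Finset.sum_mul_sum]
        rw [map_sum]
        refine Finset.sum_congr rfl fun i _ => ?_
        rw [map_sum]
        refine Finset.sum_congr rfl fun j _ => ?_
        rw [smul_mul_smul_comm, map_smul]

lemma antipode_mul (a b : H) : SH K H (a * b) = SH K H b * SH K H a := by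
  classical
  let ra := Coalgebra.Repr.arbitrary K a
  let rb := Coalgebra.Repr.arbitrary K b
  let ra1 : ∀ i, Coalgebra.Repr K (ra.left i) (H × H) := fun i => Coalgebra.Repr.arbitrary K _
  let ra2 : ∀ i, Coalgebra.Repr K (ra.right i) (H × H) := fun i => Coalgebra.Repr.arbitrary K _
  let rb1 : ∀ j, Coalgebra.Repr K (rb.left j) (H × H) := fun j => Coalgebra.Repr.arbitrary K _
  let rb2 : ∀ j, Coalgebra.Repr K (rb.right j) (H × H) := fun j => Coalgebra.Repr.arbitrary K _
  have hA := Coalgebra.sum_tmul_tmul_eq (R := K) ra ra1 ra2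
  have hB := Coalgebra.sum_tmul_tmul_eq (R := K) rb rb1 rb2
  have key := congrArg (PsiBig K H) (congrArg₂ (· ⊗ₜ[K] ·) hA hB)
  simp only [TensorProduct.sum_tmul, TensorProduct.tmul_sum, map_sum, PsiBig_tmul] at key
  rw [collapse1 ra rb ra1 rb1, collapse2 ra rb ra2 rb2] at key
  exact key.symm

end hopf2

section hopf3

variable {K : Type*} [CommRing K] {H : Type*} [Ring H] [HopfAlgebra K H]

open Coalgebra HopfAlgebra

/-- `Φ(x ⊗ y) = S(x) y`. -/
def Phi (K : Type*) [CommRing K] (H : Type*) [Ring H] [HopfAlgebra K H] :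
    H ⊗[K] H →ₗ[K] H := muH K H ∘ₗ (SH K H).rTensor H

/-- `Φ'(x ⊗ y) = x S(y)`. -/
def Phi' (K : Type*) [CommRing K] (H : Type*) [Ring H] [HopfAlgebra K H] :
    H ⊗[K] H →ₗ[K] H := muH K H ∘ₗ (SH K H).lTensor H

@[simp] lemma Phi_tmul (x y : H) : Phi K H (x ⊗ₜ y) = SH K H x * y := by simp [Phi, muH]
@[simp] lemma Phi'_tmul (x y : H) : Phi' K H (x ⊗ₜ y) = x * SH K H y := by simp [Phi', muH]

lemma chi_eq (F : H ⊗[K] H) : chi K H F = Phi' K H F := rfl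
lemma chiInv_eq (F : H ⊗[K] H) : chiInv K H F = Phi K H F := rfl

lemma Phi_comul (ξ : H) : Phi K H (ΔH K H ξ) = εH K H ξ • 1 := by
  simpa [Phi, muH, SH, ΔH, εH, Algebra.algebraMap_eq_smul_one] using
    HopfAlgebra.mul_antipode_rTensor_comul_apply (R := K) ξ

lemma Phi'_comul (ξ : H) : Phi' K H (ΔH K H ξ) = εH K H ξ • 1 := by
  simpa [Phi', muH, SH, ΔH, εH, Algebra.algebraMap_eq_smul_one] using
    HopfAlgebra.mul_antipode_lTensor_comul_apply (R := K) ξ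

lemma Phi_one : Phi K H 1 = 1 := by
  rw [Algebra.TensorProduct.one_def, Phi_tmul, S_one, one_mul]

lemma Phi_mul_tmul (r : H ⊗[K] H) (a b : H) :
    Phi K H (r * (a ⊗ₜ b)) = SH K H a * Phi K H r * b := by
  induction r using TensorProduct.induction_on with
  | zero => simp
  | tmul p q => simp [Algebra.TensorProduct.tmul_mul_tmul, antipode_mul, mul_assoc]
  | add u u' ih ih' => simp only [add_mul, map_add, ih, ih', mul_add]

lemma Phi'_tmul_mul (r : H ⊗[K] H) (a b : H) :
    Phi' K H ((a ⊗ₜ b) * r) = a * Phi' K H r * SH K H b := by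
  induction r using TensorProduct.induction_on with
  | zero => simp
  | tmul p q => simp [Algebra.TensorProduct.tmul_mul_tmul, antipode_mul, mul_assoc]
  | add u u' ih ih' => simp only [mul_add, map_add, ih, ih', add_mul]

lemma Phi_comul_mul (ξ : H) (w : H ⊗[K] H) :
    Phi K H (ΔH K H ξ * w) = εH K H ξ • Phi K H w := by
  induction w using TensorProduct.induction_on with
  | zero => simp
  | tmul u v =>
    rw [Phi_mul_tmul, Phi_comul, Phi_tmul, mul_smul_comm, mul_one, smul_mul_assoc]
  | add u u' ih ih' => simp only [mul_add, map_add, ih, ih', smul_add]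

/-- contraction of the first factor with the counit. -/
def cFc (K : Type*) [CommRing K] (H : Type*) [Ring H] [HopfAlgebra K H] :
    H ⊗[K] H →ₗ[K] H := (TensorProduct.lid K H).toLinearMap ∘ₗ (εH K H).rTensor H
/-- contraction of the second factor with the counit. -/
def cSc (K : Type*) [CommRing K] (H : Type*) [Ring H] [HopfAlgebra K H] :
    H ⊗[K] H →ₗ[K] H := (TensorProduct.rid K H).toLinearMap ∘ₗ (εH K H).lTensor H

@[simp] lemma cFc_tmul (a b : H) : cFc K H (a ⊗ₜ b) = εH K H a • b := by simp [cFc]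
@[simp] lemma cSc_tmul (a b : H) : cSc K H (a ⊗ₜ b) = εH K H b • a := by simp [cSc]

lemma cFc_comul (ξ : H) : cFc K H (ΔH K H ξ) = ξ := by
  simp [cFc, ΔH, εH]

lemma cSc_comul (ξ : H) : cSc K H (ΔH K H ξ) = ξ := by
  simp [cSc, ΔH, εH]

lemma counit_one' : εH K H 1 = 1 := by simp [εH]

lemma cFc_one : cFc K H 1 = 1 := by
  rw [Algebra.TensorProduct.one_def, cFc_tmul, counit_one', one_smul]
lemma cSc_one : cSc K H 1 = 1 := by
  rw [Algebra.TensorProduct.one_def, cSc_tmul, counit_one', one_smul]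

/-- contraction of the first factor of a triple tensor. -/
def cE3 (K : Type*) [CommRing K] (H : Type*) [Ring H] [HopfAlgebra K H] :
    H ⊗[K] (H ⊗[K] H) →ₗ[K] H ⊗[K] H :=
  (TensorProduct.lid K (H ⊗[K] H)).toLinearMap ∘ₗ (εH K H).rTensor (H ⊗[K] H)
/-- contraction of the third factor of a triple tensor. -/
def cL3 (K : Type*) [CommRing K] (H : Type*) [Ring H] [HopfAlgebra K H] :
    H ⊗[K] (H ⊗[K] H) →ₗ[K] H ⊗[K] H :=
  LinearMap.lTensor H (cSc K H)

@[simp] lemma cE3_tmul (a : H) (w : H ⊗[K] H) : cE3 K H (a ⊗ₜ w) = εH K H a • w := by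
  simp [cE3]
@[simp] lemma cL3_tmul (a : H) (w : H ⊗[K] H) : cL3 K H (a ⊗ₜ w) = a ⊗ₜ cSc K H w := by
  simp [cL3]

lemma ins1_apply (x : H ⊗[K] H) : ins1 K H x = 1 ⊗ₜ x := rfl
@[simp] lemma ins2_tmul (a b : H) : ins2 K H (a ⊗ₜ b) = a ⊗ₜ (1 ⊗ₜ b) := by simp [ins2]
@[simp] lemma ins3_tmul (a b : H) : ins3 K H (a ⊗ₜ b) = a ⊗ₜ (b ⊗ₜ 1) := by simp [ins3]

/-- the linearised associator. -/
def asc (K : Type*) [CommRing K] (H : Type*) [Ring H] [HopfAlgebra K H] :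
    (H ⊗[K] H) ⊗[K] H →ₗ[K] H ⊗[K] (H ⊗[K] H) := (TensorProduct.assoc K H H H).toLinearMap

@[simp] lemma asc_tmul (a b c : H) : asc K H ((a ⊗ₜ b) ⊗ₜ c) = a ⊗ₜ (b ⊗ₜ c) := rfl

lemma comulLeft_tmul (a b : H) : comulLeft K H (a ⊗ₜ b) = asc K H (ΔH K H a ⊗ₜ b) := by
  simp [comulLeft, asc]

lemma comulRight_tmul (a b : H) : comulRight K H (a ⊗ₜ b) = a ⊗ₜ ΔH K H b := by
  simp [comulRight]

lemma cL3_comulRight (x : H ⊗[K] H) : cL3 K H (comulRight K H x) = x := by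
  induction x using TensorProduct.induction_on with
  | zero => simp
  | tmul a b => rw [comulRight_tmul, cL3_tmul, cSc_comul]
  | add u u' ih ih' => simp only [map_add, ih, ih']

lemma cE3_asc (w : H ⊗[K] H) (b : H) : cE3 K H (asc K H (w ⊗ₜ b)) = cFc K H w ⊗ₜ b := by
  induction w using TensorProduct.induction_on with
  | zero => simp
  | tmul u v => rw [asc_tmul, cE3_tmul, cFc_tmul, TensorProduct.smul_tmul']
  | add u u' ih ih' =>
      simp only [TensorProduct.add_tmul, map_add, ih, ih']

lemma cE3_comulLeft (x : H ⊗[K] H) : cE3 K H (comulLeft K H x) = x := by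
  induction x using TensorProduct.induction_on with
  | zero => simp
  | tmul a b => rw [comulLeft_tmul, cE3_asc, cFc_comul]
  | add u u' ih ih' => simp only [map_add, ih, ih']

lemma cL3_ins2_mul_ins3 (x y : H ⊗[K] H) :
    cL3 K H (ins2 K H x * ins3 K H y) = (cSc K H x ⊗ₜ 1) * y := by
  induction x using TensorProduct.induction_on with
  | zero => simp
  | tmul a b =>
    induction y using TensorProduct.induction_on with
    | zero => simp
    | tmul c d =>
      simp [Algebra.TensorProduct.tmul_mul_tmul, TensorProduct.smul_tmul',
        TensorProduct.tmul_smul, smul_mul_assoc]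
    | add u u' ih ih' => simp only [mul_add, map_add, ih, ih']
  | add u u' ih ih' => simp only [map_add, add_mul, ih, ih', TensorProduct.add_tmul]

lemma cE3_ins2_mul_ins1 (x y : H ⊗[K] H) :
    cE3 K H (ins2 K H x * ins1 K H y) = (1 ⊗ₜ cFc K H x) * y := by
  induction x using TensorProduct.induction_on with
  | zero => simp
  | tmul a b =>
    rw [ins2_tmul, ins1_apply, Algebra.TensorProduct.tmul_mul_tmul, cE3_tmul, cFc_tmul, mul_one]
    rw [show ((1:H) ⊗ₜ[K] (εH K H a • b)) = εH K H a • ((1:H) ⊗ₜ[K] b) from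
      (TensorProduct.tmul_smul _ _ _), smul_mul_assoc]
  | add u u' ih ih' =>
      simp only [map_add, add_mul, ih, ih']
      rw [TensorProduct.tmul_add, add_mul]

/-- `(id ⊗ ε)(R) = 1`. -/
lemma cSc_Rm {Rm Rinv : H ⊗[K] H} (hmi : Rm * Rinv = 1)
    (hex2 : comulRight K H Rm = ins2 K H Rm * ins3 K H Rm) : cSc K H Rm = 1 := by
  have h3 : Rm = (cSc K H Rm ⊗ₜ 1) * Rm := by
    conv_lhs => rw [← cL3_comulRight Rm, hex2, cL3_ins2_mul_ins3]
  have h4 : (1 : H ⊗[K] H) = cSc K H Rm ⊗ₜ 1 := by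
    conv_lhs => rw [← hmi, h3]
    rw [mul_assoc, hmi, mul_one]
  have h5 := congrArg (cSc K H) h4
  rw [cSc_one, cSc_tmul, counit_one', one_smul] at h5
  exact h5.symm

/-- `(ε ⊗ id)(R) = 1`. -/
lemma cFc_Rm {Rm Rinv : H ⊗[K] H} (hmi : Rm * Rinv = 1)
    (hex1 : comulLeft K H Rm = ins2 K H Rm * ins1 K H Rm) : cFc K H Rm = 1 := by
  have h3 : Rm = (1 ⊗ₜ cFc K H Rm) * Rm := by
    conv_lhs => rw [← cE3_comulLeft Rm, hex1, cE3_ins2_mul_ins1]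
  have h4 : (1 : H ⊗[K] H) = 1 ⊗ₜ cFc K H Rm := by
    conv_lhs => rw [← hmi, h3]
    rw [mul_assoc, hmi, mul_one]
  have h5 := congrArg (cFc K H) h4
  rw [cFc_one, cFc_tmul, counit_one', one_smul] at h5
  exact h5.symm

end hopf3

section hopf4

variable {K : Type*} [CommRing K] {H : Type*} [Ring H] [HopfAlgebra K H]

open Coalgebra HopfAlgebra

/-- the algebra automorphism of `H ⊗ (H ⊗ H)` swapping the first two factors. -/
def sigma3 (K : Type*) [CommRing K] (H : Type*) [Ring H] [HopfAlgebra K H] :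
    H ⊗[K] (H ⊗[K] H) ≃ₐ[K] H ⊗[K] (H ⊗[K] H) :=
  (Algebra.TensorProduct.assoc K K K H H H).symm.trans
    ((Algebra.TensorProduct.congr (Algebra.TensorProduct.comm K H H)
        (AlgEquiv.refl (R := K) (A₁ := H))).trans (Algebra.TensorProduct.assoc K K K H H H))

@[simp] lemma sigma3_tmul (a b c : H) :
    sigma3 K H (a ⊗ₜ (b ⊗ₜ c)) = b ⊗ₜ (a ⊗ₜ c) := by
  simp [sigma3]

lemma sigma3_ins1 (x : H ⊗[K] H) : sigma3 K H (ins1 K H x) = ins2 K H x := by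
  induction x using TensorProduct.induction_on with
  | zero => simp [ins1_apply]
  | tmul a b => rw [ins1_apply, sigma3_tmul, ins2_tmul]
  | add u u' ih ih' => simp only [map_add, ih, ih']

lemma sigma3_ins2 (x : H ⊗[K] H) : sigma3 K H (ins2 K H x) = ins1 K H x := by
  induction x using TensorProduct.induction_on with
  | zero => simp [ins1_apply]
  | tmul a b => rw [ins2_tmul, sigma3_tmul, ins1_apply]
  | add u u' ih ih' => simp only [map_add, ih, ih']

lemma sigma3_asc (w : H ⊗[K] H) (b : H) :
    sigma3 K H (asc K H (w ⊗ₜ b)) = asc K H (TensorProduct.comm K H H w ⊗ₜ b) := by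
  induction w using TensorProduct.induction_on with
  | zero => simp
  | tmul u v => rw [asc_tmul, sigma3_tmul, TensorProduct.comm_tmul, asc_tmul]
  | add u u' ih ih' => simp only [TensorProduct.add_tmul, map_add, ih, ih']

lemma asc_mul (w w' : H ⊗[K] H) (b b' : H) :
    asc K H ((w * w') ⊗ₜ (b * b')) = asc K H (w ⊗ₜ b) * asc K H (w' ⊗ₜ b') := by
  induction w using TensorProduct.induction_on with
  | zero => simp
  | tmul p q =>
    induction w' using TensorProduct.induction_on with
    | zero => simp
    | tmul p' q' =>
      rw [Algebra.TensorProduct.tmul_mul_tmul, asc_tmul, asc_tmul, asc_tmul,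
        Algebra.TensorProduct.tmul_mul_tmul, Algebra.TensorProduct.tmul_mul_tmul]
    | add u u' ih ih' =>
      simp only [mul_add, TensorProduct.add_tmul, map_add, ih, ih', add_mul]
  | add u u' ih ih' =>
    simp only [add_mul, TensorProduct.add_tmul, map_add, ih, ih']

lemma asc_one (x : H ⊗[K] H) : asc K H (x ⊗ₜ 1) = ins3 K H x := by
  induction x using TensorProduct.induction_on with
  | zero => simp
  | tmul a b => rw [asc_tmul, ins3_tmul]
  | add u u' ih ih' => simp only [TensorProduct.add_tmul, map_add, ih, ih']

lemma ins3_mul (x y : H ⊗[K] H) : ins3 K H x * ins3 K H y = ins3 K H (x * y) := by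
  rw [← asc_one x, ← asc_one y, ← asc_mul, mul_one, asc_one]

lemma ins3_one : ins3 K H (1 : H ⊗[K] H) = 1 := by
  rw [Algebra.TensorProduct.one_def, ins3_tmul]
  rfl

lemma ins1_mul (x y : H ⊗[K] H) : ins1 K H x * ins1 K H y = ins1 K H (x * y) := by
  rw [ins1_apply, ins1_apply, ins1_apply, Algebra.TensorProduct.tmul_mul_tmul, one_mul]

lemma ins1_one : ins1 K H (1 : H ⊗[K] H) = 1 := by
  rw [ins1_apply]; rfl

lemma sigma3_comulLeft {Rm Rinv : H ⊗[K] H} (hR : IsQuasitriangular K H Rm Rinv)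
    (x : H ⊗[K] H) :
    sigma3 K H (comulLeft K H x) = ins3 K H Rm * comulLeft K H x * ins3 K H Rinv := by
  induction x using TensorProduct.induction_on with
  | zero => simp
  | tmul a b =>
    rw [comulLeft_tmul, sigma3_asc, hR.quasi_cocomm a]
    have h1 := asc_mul (K := K) (H := H) Rm (ΔH K H a * Rinv) 1 b
    rw [one_mul, ← mul_assoc, asc_one] at h1
    have h2 := asc_mul (K := K) (H := H) (ΔH K H a) Rinv b 1
    rw [mul_one, asc_one] at h2
    rw [h1, h2, mul_assoc]
  | add u u' ih ih' => simp only [map_add, ih, ih', mul_add, add_mul]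

/-- the quantum Yang–Baxter equation `R₂₃ R₁₃ R₁₂ = R₁₂ R₁₃ R₂₃`. -/
lemma QYBE {Rm Rinv : H ⊗[K] H} (hR : IsQuasitriangular K H Rm Rinv) :
    ins1 K H Rm * ins2 K H Rm * ins3 K H Rm = ins3 K H Rm * ins2 K H Rm * ins1 K H Rm := by
  have h := sigma3_comulLeft hR Rm
  rw [hR.hexagon1, map_mul, sigma3_ins2, sigma3_ins1] at h
  have h2 := congrArg (· * ins3 K H Rm) h
  simp only [mul_assoc] at h2 ⊢
  rw [ins3_mul, hR.inv_mul, ins3_one, mul_one] at h2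
  exact h2

/-- `ψ(x ⊗ y ⊗ z) = x S(y) z` -/
def psi3 (K : Type*) [CommRing K] (H : Type*) [Ring H] [HopfAlgebra K H] :
    H ⊗[K] (H ⊗[K] H) →ₗ[K] H := muH K H ∘ₗ LinearMap.lTensor H (Phi K H)

@[simp] lemma psi3_tmul (x : H) (w : H ⊗[K] H) :
    psi3 K H (x ⊗ₜ w) = x * Phi K H w := by simp [psi3, muH]

lemma psi3_comulRight (x : H ⊗[K] H) : psi3 K H (comulRight K H x) = cSc K H x := by
  induction x using TensorProduct.induction_on with
  | zero => simp
  | tmul a b =>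
    rw [comulRight_tmul, psi3_tmul, Phi_comul, mul_smul_comm, mul_one, cSc_tmul]
  | add u u' ih ih' => simp only [map_add, ih, ih']

lemma psi3_ins1_mul (w : H ⊗[K] H) (x y z : H) :
    psi3 K H (ins1 K H w * (x ⊗ₜ (y ⊗ₜ z))) = x * (SH K H y * Phi K H w * z) := by
  rw [ins1_apply, Algebra.TensorProduct.tmul_mul_tmul, one_mul, psi3_tmul, Phi_mul_tmul]

lemma psi3_ins1_ins3_mul (Rinv : H ⊗[K] H) (r : H ⊗[K] H) (x y z : H) :
    psi3 K H (ins1 K H Rinv * (ins3 K H r * (x ⊗ₜ (y ⊗ₜ z))))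
      = Phi' K H (r * ((x * SH K H y) ⊗ₜ 1)) * (Phi K H Rinv * z) := by
  induction r using TensorProduct.induction_on with
  | zero => simp
  | tmul p q =>
    rw [ins3_tmul, Algebra.TensorProduct.tmul_mul_tmul, Algebra.TensorProduct.tmul_mul_tmul,
      one_mul, psi3_ins1_mul, antipode_mul, Algebra.TensorProduct.tmul_mul_tmul, mul_one,
      Phi'_tmul]
    simp only [mul_assoc]
  | add u u' ih ih' => simp only [map_add, add_mul, ih, ih', mul_add]

lemma psi3_asc_form {Rm Rinv : H ⊗[K] H} (w : H ⊗[K] H) (b : H) :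
    psi3 K H (ins1 K H Rinv * (ins3 K H Rm * asc K H (w ⊗ₜ b)))
      = Phi' K H (Rm * (Phi' K H w ⊗ₜ 1)) * (Phi K H Rinv * b) := by
  induction w using TensorProduct.induction_on with
  | zero => simp
  | tmul u v => rw [asc_tmul, psi3_ins1_ins3_mul, Phi'_tmul]
  | add u u' ih ih' =>
    simp only [TensorProduct.add_tmul, map_add, mul_add, add_mul, ih, ih']

lemma psi3_main {Rm Rinv : H ⊗[K] H} (x : H ⊗[K] H) :
    psi3 K H (ins1 K H Rinv * (ins3 K H Rm * comulLeft K H x))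
      = Phi' K H Rm * (Phi K H Rinv * cFc K H x) := by
  induction x using TensorProduct.induction_on with
  | zero => simp
  | tmul a b =>
    rw [comulLeft_tmul, psi3_asc_form, Phi'_comul, cFc_tmul]
    rw [show (εH K H a • (1:H)) ⊗ₜ[K] (1:H) = εH K H a • ((1:H) ⊗ₜ[K] (1:H)) from
      TensorProduct.smul_tmul' _ _ _, ← Algebra.TensorProduct.one_def, mul_smul_comm,
      mul_one, map_smul, smul_mul_assoc, mul_smul_comm, mul_smul_comm]
  | add u u' ih ih' => simp only [map_add, mul_add, ih, ih', smul_add]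

/-- `χ χ⁻¹ = 1`. -/
lemma chi_chiInv {Rm Rinv : H ⊗[K] H} (hR : IsQuasitriangular K H Rm Rinv) :
    chi K H Rm * chiInv K H Rinv = 1 := by
  have h1 := psi3_main (K := K) (H := H) (Rm := Rm) (Rinv := Rinv) Rm
  rw [cFc_Rm hR.mul_inv hR.hexagon1, mul_one] at h1
  rw [hR.hexagon1] at h1
  have hq : ins3 K H Rm * (ins2 K H Rm * ins1 K H Rm)
      = ins1 K H Rm * ins2 K H Rm * ins3 K H Rm := by
    rw [← mul_assoc, ← QYBE hR]
  rw [hq] at h1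
  rw [show ins1 K H Rinv * (ins1 K H Rm * ins2 K H Rm * ins3 K H Rm)
      = (ins1 K H Rinv * ins1 K H Rm) * (ins2 K H Rm * ins3 K H Rm) by
    simp only [mul_assoc]] at h1
  rw [ins1_mul, hR.inv_mul, ins1_one, one_mul, ← hR.hexagon2, psi3_comulRight,
    cSc_Rm hR.mul_inv hR.hexagon2] at h1
  rw [chi_eq, chiInv_eq, h1.symm]

end hopf4

section hopf5

variable {K : Type*} [CommRing K] {H : Type*} [Ring H] [HopfAlgebra K H]

open Coalgebra HopfAlgebra

/-- the co-opposite convolution product: `(f ⋆ g)(ξ) = Σ f(ξ₂) g(ξ₁)`. -/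
def convH (K : Type*) [CommRing K] (H : Type*) [Ring H] [HopfAlgebra K H]
    (f g : H →ₗ[K] H) : H →ₗ[K] H :=
  muH K H ∘ₗ (TensorProduct.comm K H H).toLinearMap ∘ₗ TensorProduct.map g f ∘ₗ ΔH K H

lemma convH_repr (f g : H →ₗ[K] H) {ξ : H} {ι : Type*} (r : Coalgebra.Repr K ξ ι) :
    convH K H f g ξ = ∑ i ∈ r.index, f (r.right i) * g (r.left i) := by
  simp only [convH, LinearMap.coe_comp, Function.comp_apply, ΔH, LinearEquiv.coe_coe]
  rw [← r.eq]
  simp [map_sum, muH]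

def uEps (K : Type*) [CommRing K] (H : Type*) [Ring H] [HopfAlgebra K H] : H →ₗ[K] H :=
  Algebra.linearMap K H ∘ₗ εH K H

lemma uEps_apply (ξ : H) : uEps K H ξ = εH K H ξ • 1 := by
  simp [uEps, Algebra.algebraMap_eq_smul_one]

lemma convH_unit_right (f : H →ₗ[K] H) : convH K H f (uEps K H) = f := by
  ext ξ
  rw [convH_repr f _ (Coalgebra.Repr.arbitrary K ξ)]
  calc ∑ i ∈ (Coalgebra.Repr.arbitrary K ξ).index,
      f ((Coalgebra.Repr.arbitrary K ξ).right i) *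
        uEps K H ((Coalgebra.Repr.arbitrary K ξ).left i)
      = ∑ i ∈ (Coalgebra.Repr.arbitrary K ξ).index,
        f (εH K H ((Coalgebra.Repr.arbitrary K ξ).left i) •
          (Coalgebra.Repr.arbitrary K ξ).right i) := by
        refine Finset.sum_congr rfl fun i _ => ?_
        rw [uEps_apply, mul_smul_comm, mul_one, map_smul]
    _ = f ξ := by rw [← map_sum, repr_counit_left]

lemma convH_unit_left (g : H →ₗ[K] H) : convH K H (uEps K H) g = g := by
  ext ξ
  rw [convH_repr _ g (Coalgebra.Repr.arbitrary K ξ)]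
  calc ∑ i ∈ (Coalgebra.Repr.arbitrary K ξ).index,
      uEps K H ((Coalgebra.Repr.arbitrary K ξ).right i) *
        g ((Coalgebra.Repr.arbitrary K ξ).left i)
      = ∑ i ∈ (Coalgebra.Repr.arbitrary K ξ).index,
        g (εH K H ((Coalgebra.Repr.arbitrary K ξ).right i) •
          (Coalgebra.Repr.arbitrary K ξ).left i) := by
        refine Finset.sum_congr rfl fun i _ => ?_
        rw [uEps_apply, smul_mul_assoc, one_mul, map_smul]
    _ = g ξ := by rw [← map_sum, repr_counit_right]

/-- joint collapse map used for associativity of the convolution. -/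
def XiC (K : Type*) [CommRing K] (H : Type*) [Ring H] [HopfAlgebra K H]
    (f g h : H →ₗ[K] H) : H ⊗[K] (H ⊗[K] H) →ₗ[K] H :=
  muH K H ∘ₗ (TensorProduct.comm K H H).toLinearMap ∘ₗ
    TensorProduct.map h (muH K H ∘ₗ (TensorProduct.comm K H H).toLinearMap ∘ₗ
      TensorProduct.map g f)

@[simp] lemma XiC_tmul (f g h : H →ₗ[K] H) (x y z : H) :
    XiC K H f g h (x ⊗ₜ (y ⊗ₜ z)) = (f z * g y) * h x := by
  simp [XiC, muH]

lemma convH_assoc (f g h : H →ₗ[K] H) :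
    convH K H (convH K H f g) h = convH K H f (convH K H g h) := by
  ext ξ
  set r := Coalgebra.Repr.arbitrary K ξ with hr
  set r1 : ∀ i, Coalgebra.Repr K (r.left i) (H × H) := fun i => Coalgebra.Repr.arbitrary K _ with hr1
  set r2 : ∀ i, Coalgebra.Repr K (r.right i) (H × H) := fun i => Coalgebra.Repr.arbitrary K _ with hr2
  have key := congrArg (XiC K H f g h) (Coalgebra.sum_tmul_tmul_eq (R := K) r r1 r2)
  simp only [map_sum, XiC_tmul] at key
  have lhs : convH K H (convH K H f g) h ξ
      = ∑ i ∈ r.index, ∑ k ∈ (r2 i).index,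
        (f ((r2 i).right k) * g ((r2 i).left k)) * h (r.left i) := by
    rw [convH_repr _ h r]
    refine Finset.sum_congr rfl fun i _ => ?_
    rw [convH_repr f g (r2 i), Finset.sum_mul]
  have rhs : convH K H f (convH K H g h) ξ
      = ∑ i ∈ r.index, ∑ k ∈ (r1 i).index,
        (f (r.right i) * g ((r1 i).right k)) * h ((r1 i).left k) := by
    rw [convH_repr f _ r]
    refine Finset.sum_congr rfl fun i _ => ?_
    rw [convH_repr g h (r1 i), Finset.mul_sum]
    exact Finset.sum_congr rfl fun k _ => by rw [mul_assoc]
  rw [lhs, rhs, ← key]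

lemma stepB (Sinv : H →ₗ[K] H) (hS1 : ∀ ξ : H, SH K H (Sinv ξ) = ξ)
    (hS2 : ∀ ξ : H, Sinv (SH K H ξ) = ξ) (ξ : H) :
    convH K H LinearMap.id Sinv ξ = εH K H ξ • 1 := by
  have hinj : Function.Injective (SH K H) := fun x y hxy => by rw [← hS2 x, hxy, hS2]
  apply hinj
  rw [convH_repr _ _ (Coalgebra.Repr.arbitrary K ξ), map_sum, map_smul, S_one]
  calc ∑ i ∈ (Coalgebra.Repr.arbitrary K ξ).index,
      SH K H (LinearMap.id ((Coalgebra.Repr.arbitrary K ξ).right i) *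
        Sinv ((Coalgebra.Repr.arbitrary K ξ).left i))
      = ∑ i ∈ (Coalgebra.Repr.arbitrary K ξ).index,
        (Coalgebra.Repr.arbitrary K ξ).left i *
          SH K H ((Coalgebra.Repr.arbitrary K ξ).right i) := by
        refine Finset.sum_congr rfl fun i _ => ?_
        rw [LinearMap.id_coe, id_eq, antipode_mul, hS1]
    _ = εH K H ξ • 1 := repr_mul_antipode _

lemma twistAntipode_apply (F Fi : H ⊗[K] H) (x : H) :
    twistAntipode K H F Fi x = chi K H F * (SH K H x * chiInv K H Fi) := by
  simp [twistAntipode, mul_assoc]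

lemma stepA {Rm Rinv : H ⊗[K] H} (hR : IsQuasitriangular K H Rm Rinv) (ξ : H) :
    convH K H (twistAntipode K H Rm Rinv) LinearMap.id ξ = εH K H ξ • 1 := by
  set T := twistAntipode K H Rm Rinv with hT
  set OmT : H ⊗[K] H →ₗ[K] H := muH K H ∘ₗ TensorProduct.map T LinearMap.id with hOmT
  have OmT_tmul : ∀ x y : H, OmT (x ⊗ₜ y) = T x * y := by
    intro x y; simp [hOmT, muH]
  set PhiC : H ⊗[K] H →ₗ[K] H :=
    Phi K H ∘ₗ LinearMap.mulLeft K ((1 : H) ⊗ₜ chiInv K H Rinv) with hPhiC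
  have PhiC_tmul : ∀ p q : H, PhiC (p ⊗ₜ q) = SH K H p * (chiInv K H Rinv * q) := by
    intro p q
    simp [hPhiC, Algebra.TensorProduct.tmul_mul_tmul, mul_assoc]
  have key1 : ∀ u : H ⊗[K] H,
      muH K H ((TensorProduct.comm K H H) ((TensorProduct.map LinearMap.id T) u))
      = OmT (TensorProduct.comm K H H u) := by
    intro u
    induction u using TensorProduct.induction_on with
    | zero => simp
    | tmul x y => simp [OmT_tmul, muH]
    | add u u' ih ih' => simp only [map_add, ih, ih']
  have key2 : ∀ (r : H ⊗[K] H) (x y : H),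
      OmT (r * (x ⊗ₜ y)) = chi K H Rm * (SH K H x * (PhiC r * y)) := by
    intro r x y
    induction r using TensorProduct.induction_on with
    | zero => simp
    | tmul p q =>
      rw [Algebra.TensorProduct.tmul_mul_tmul, OmT_tmul, twistAntipode_apply, antipode_mul,
        PhiC_tmul]
      simp only [mul_assoc]
    | add u u' ih ih' => simp only [map_add, add_mul, ih, ih', mul_add]
  have key3 : PhiC Rm = 1 := by
    have e : ∀ r : H ⊗[K] H, PhiC r = Phi K H (Rinv * r) := by
      intro r
      induction r using TensorProduct.induction_on with
      | zero => simp
      | tmul p q => rw [PhiC_tmul, Phi_mul_tmul, chiInv_eq, mul_assoc]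
      | add u u' ih ih' => simp only [map_add, mul_add, ih, ih']
    rw [e, hR.inv_mul, Phi_one]
  have key4 : ∀ u : H ⊗[K] H, OmT (Rm * u) = chi K H Rm * Phi K H u := by
    intro u
    induction u using TensorProduct.induction_on with
    | zero => simp
    | tmul x y => rw [key2, key3, one_mul, Phi_tmul]
    | add u u' ih ih' => simp only [map_add, mul_add, ih, ih']
  calc convH K H T LinearMap.id ξ
      = OmT (TensorProduct.comm K H H (ΔH K H ξ)) := key1 (ΔH K H ξ)
    _ = OmT (Rm * (ΔH K H ξ * Rinv)) := by rw [hR.quasi_cocomm, mul_assoc]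
    _ = chi K H Rm * Phi K H (ΔH K H ξ * Rinv) := key4 _
    _ = chi K H Rm * (εH K H ξ • Phi K H Rinv) := by rw [Phi_comul_mul]
    _ = εH K H ξ • (chi K H Rm * chiInv K H Rinv) := by rw [mul_smul_comm, chiInv_eq]
    _ = εH K H ξ • 1 := by rw [chi_chiInv hR]

lemma twistAntipode_eq {Rm Rinv : H ⊗[K] H} (hR : IsQuasitriangular K H Rm Rinv)
    (Sinv : H →ₗ[K] H) (hS1 : ∀ ξ : H, SH K H (Sinv ξ) = ξ)
    (hS2 : ∀ ξ : H, Sinv (SH K H ξ) = ξ) :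
    twistAntipode K H Rm Rinv = Sinv := by
  have hA : convH K H (twistAntipode K H Rm Rinv) LinearMap.id = uEps K H :=
    LinearMap.ext fun ξ => by rw [stepA hR ξ, uEps_apply]
  have hB : convH K H LinearMap.id Sinv = uEps K H :=
    LinearMap.ext fun ξ => by rw [stepB Sinv hS1 hS2 ξ, uEps_apply]
  calc twistAntipode K H Rm Rinv
      = convH K H (twistAntipode K H Rm Rinv) (uEps K H) := (convH_unit_right _).symm
    _ = convH K H (twistAntipode K H Rm Rinv) (convH K H LinearMap.id Sinv) := by rw [hB]
    _ = convH K H (convH K H (twistAntipode K H Rm Rinv) LinearMap.id) Sinv :=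
        (convH_assoc _ _ _).symm
    _ = convH K H (uEps K H) Sinv := by rw [hA]
    _ = Sinv := convH_unit_left Sinv

end hopf5

/-- for a quasitriangular Hopf algebra `(H,R)` with invertible
antipode, a quasi-commutative `H`-module algebra `A` and a strong
quasi-commutative left `H`-module `A`-bimodule `V`, the `R`-twisted structures
coincide with the opposite ones: `H^R = H^cop` (i.e. `Δ^R = Δ^cop` and
`S^R = S⁻¹`), `A_{⋆_R} = A^op` (i.e. `a ⋆_R b = b a`) and `V_{⋆_R} = V^op`
(i.e. `a ⋆_R v = v·a` and `v ⋆_R a = a·v`). -/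
theorem R_twist_is_opposite (Rm Rinv : H ⊗[K] H)
    (hR : IsQuasitriangular K H Rm Rinv)
    -- the antipode is invertible
    (Sinv : H →ₗ[K] H) (hS1 : ∀ ξ : H, SH K H (Sinv ξ) = ξ)
    (hS2 : ∀ ξ : H, Sinv (SH K H ξ) = ξ)
    -- the quasi-commutative H-module algebra A
    (mA : A →ₗ[K] A →ₗ[K] A) (eA : A) (ρA : H →ₗ[K] A →ₗ[K] A)
    (hAalg : ∀ a b c : A, mA (mA a b) c = mA a (mA b c))
    (hAone : ∀ a : A, mA eA a = a ∧ mA a eA = a)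
    (hAma : IsModuleAlgebra K H mA ρA)
    (hqcA : ∀ a b : A, mA a b = sw K H Rinv ρA ρA mA b a)
    -- the strong quasi-commutative left H-module A-bimodule V
    (ρV : H →ₗ[K] V →ₗ[K] V) (hV : IsHAction K H ρV)
    (lV rV : A →ₗ[K] V →ₗ[K] V)
    (hlV : ∀ (a b : A) (v : V), lV (mA a b) v = lV a (lV b v)) (hlVe : ∀ v : V, lV eA v = v)
    (hrV : ∀ (a b : A) (v : V), rV (mA a b) v = rV b (rV a v)) (hrVe : ∀ v : V, rV eA v = v)
    (hlrV : ∀ (a b : A) (v : V), lV a (rV b v) = rV b (lV a v))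
    (hclV : ∀ (ξ : H) (a : A) (v : V), ρV ξ (lV a v) = sw K H (ΔH K H ξ) ρA ρV lV a v)
    (hcrV : ∀ (ξ : H) (a : A) (v : V), ρV ξ (rV a v) = sw K H (ΔH K H ξ) ρV ρA rV.flip v a)
    (hqcV : ∀ (a : A) (v : V), rV a v = sw K H Rinv ρA ρV lV a v)
    (hsqcV : ∀ (a : A) (v : V),
      rV a v = sw K H (TensorProduct.comm K H H Rm) ρA ρV lV a v) :
    -- `H^R = H^cop`: the `R`-twisted coproduct is the coopposite coproduct ...
    (∀ ξ : H, twistComul K H Rm Rinv ξ = TensorProduct.comm K H H (ΔH K H ξ))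
    -- ... and the `R`-twisted antipode is `S⁻¹`
    ∧ (∀ ξ : H, twistAntipode K H Rm Rinv ξ = Sinv ξ)
    -- `A_{⋆_R} = A^op`: `a ⋆_R b = (R̄^α ▷ a)(R̄_α ▷ b) = b a`
    ∧ (∀ a b : A, sw K H Rinv ρA ρA mA a b = mA b a)
    -- `V_{⋆_R} = V^op`: `a ⋆_R v = v·a` and `v ⋆_R a = a·v`
    ∧ (∀ (a : A) (v : V), sw K H Rinv ρA ρV lV a v = rV a v)
    ∧ (∀ (a : A) (v : V), sw K H Rinv ρV ρA rV.flip v a = lV a v) := by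
  refine ⟨?_, ?_, ?_, ?_, ?_⟩
  · intro ξ
    simpa [twistComul, mul_assoc, LinearMap.mulLeft_apply, LinearMap.mulRight_apply] using
      (hR.quasi_cocomm ξ).symm
  · intro ξ
    exact LinearMap.congr_fun (twistAntipode_eq hR Sinv hS1 hS2) ξ
  · intro a b; exact (hqcA b a).symm
  · intro a v; exact (hqcV a v).symm
  · intro a v
    obtain ⟨⟨hA1, hA2⟩, -⟩ := hAma
    obtain ⟨hV1, hV2⟩ := hV
    have hrflip : rV.flip = (sw K H (TensorProduct.comm K H H Rm) ρA ρV lV).flip := by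
      ext w b
      simp only [LinearMap.flip_apply]
      exact hsqcV b w
    rw [hrflip, sw_flip, sw_sw _ _ _ _ _ hA1 hV1,
      ← comm_mul, hR.mul_inv]
    have : TensorProduct.comm K H H (1 : H ⊗[K] H) = 1 := by
      simp [Algebra.TensorProduct.one_def]
    rw [this, sw_one _ _ _ hA2 hV2]
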